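/- Let ρ̂ > 0 and C > 0, and let l : (0, ρ̂] → ℝ be locally absolutely continuous with l(ρ) > 0 for all ρ ∈ (0, ρ̂], |l'(ρ)| ≤ C·l(ρ)² for almost every ρ, and l(ρ) → ∞ as ρ → 0⁺. Let c ≥ C and let v : (0, ρ̂] → ℝ be a locally absolutely continuous function with v'(ρ) = −c·l(ρ)·v(ρ) for almost every ρ and v(ρ̂) > 0. Then v(ρ) ≥ (v(ρ̂)/l(ρ̂))·l(ρ) for all ρ ∈ (0, ρ̂], and consequently v is not square-integrable near 0: ∫_0^ρ̂ v(t)² dt = ∞. -/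

import Mathlib

noncomputable section
open MeasureTheory Set Filter intervalIntegral

/-- `l` is locally absolutely continuous on `(0, ρ̂]` with almost-everywhere
derivative `l'`: on every compact subinterval `[a, b] ⊆ (0, ρ̂]` the derivative `l'`
is integrable and the fundamental theorem of calculus `l b − l a = ∫_a^b l'` holds. -/
def LocAbsolutelyContinuousOnIoc (l l' : ℝ → ℝ) (ρmax : ℝ) : Prop :=
  (∀ a ∈ Set.Ioc (0:ℝ) ρmax, IntegrableOn l' (Set.Icc a ρmax) volume) ∧
    ∀ a ∈ Set.Ioc (0:ℝ) ρmax, ∀ b ∈ Set.Ioc (0:ℝ) ρmax,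
      l b = l a + ∫ t in a..b, l' t

/-- Backward integral Grönwall inequality with zero data. -/
lemma gronwall_zero (a b : ℝ) (hab : a ≤ b) (φ g : ℝ → ℝ)
    (hφ : ContinuousOn φ (Set.Icc a b)) (hg : ContinuousOn g (Set.Icc a b))
    (hg0 : ∀ x ∈ Set.Icc a b, 0 ≤ g x)
    (key : ∀ x ∈ Set.Icc a b, φ x ≤ ∫ t in x..b, g t * φ t) :
    ∀ x ∈ Set.Icc a b, φ x ≤ 0 := by
  set F : ℝ → ℝ := fun t => g t * φ t with hF_def
  have hF : ContinuousOn F (Icc a b) := hg.mul hφ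
  have hsub : ∀ x ∈ Icc a b, Set.uIcc x b ⊆ Icc a b := by
    intro x hx
    rw [Set.uIcc_of_le hx.2]
    exact Set.Icc_subset_Icc hx.1 le_rfl
  have hFint : ∀ x ∈ Icc a b, IntervalIntegrable F volume x b := fun x hx =>
    (hF.mono (hsub x hx)).intervalIntegrable
  have hgint : ∀ x ∈ Icc a b, IntervalIntegrable g volume x b := fun x hx =>
    (hg.mono (hsub x hx)).intervalIntegrable
  set Φ : ℝ → ℝ := fun x => ∫ t in x..b, F t with hΦ_def
  set B : ℝ → ℝ := fun x => ∫ t in x..b, g t with hB_def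
  have hΦc : ContinuousOn Φ (Icc a b) := by
    have := continuousOn_primitive_interval_left (μ := volume) (f := F)
      (a := a) (b := b) (by rw [Set.uIcc_of_le hab]; exact hF.integrableOn_Icc)
    rwa [Set.uIcc_of_le hab] at this
  have hBc : ContinuousOn B (Icc a b) := by
    have := continuousOn_primitive_interval_left (μ := volume) (f := g)
      (a := a) (b := b) (by rw [Set.uIcc_of_le hab]; exact hg.integrableOn_Icc)
    rwa [Set.uIcc_of_le hab] at this
  have hΦ' : ∀ x ∈ Ioo a b, HasDerivAt Φ (-(F x)) x := by
    intro x hx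
    exact integral_hasDerivAt_left (hFint x (Ioo_subset_Icc_self hx))
      ((hF.mono Ioo_subset_Icc_self).stronglyMeasurableAtFilter isOpen_Ioo x hx)
      ((hF.mono Ioo_subset_Icc_self).continuousAt (Ioo_mem_nhds hx.1 hx.2))
  have hB' : ∀ x ∈ Ioo a b, HasDerivAt B (-(g x)) x := by
    intro x hx
    exact integral_hasDerivAt_left (hgint x (Ioo_subset_Icc_self hx))
      ((hg.mono Ioo_subset_Icc_self).stronglyMeasurableAtFilter isOpen_Ioo x hx)
      ((hg.mono Ioo_subset_Icc_self).continuousAt (Ioo_mem_nhds hx.1 hx.2))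
  set h : ℝ → ℝ := fun x => Φ x * Real.exp (-(B x)) with hh_def
  have hd : ∀ x ∈ Ioo a b,
      HasDerivAt h (-(F x) * Real.exp (-(B x)) + Φ x * (Real.exp (-(B x)) * g x)) x := by
    intro x hx
    have h1 : HasDerivAt (fun y => Real.exp (-(B y))) (Real.exp (-(B x)) * g x) x := by
      have := ((hB' x hx).neg).exp
      simpa using this
    exact (hΦ' x hx).mul h1
  have hmono : MonotoneOn h (Icc a b) := by
    apply monotoneOn_of_deriv_nonneg (convex_Icc a b)
      (hΦc.mul (hBc.neg.rexp))
    · rw [interior_Icc]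
      exact fun x hx => (hd x hx).differentiableAt.differentiableWithinAt
    · rw [interior_Icc]
      intro x hx
      rw [show (Φ * fun y => Real.exp ((-B) y)) = h from rfl, (hd x hx).deriv]
      have hxI := Ioo_subset_Icc_self hx
      have h1 : φ x ≤ Φ x := key x hxI
      have h2 : 0 ≤ g x := hg0 x hxI
      have h3 : (0:ℝ) < Real.exp (-(B x)) := Real.exp_pos _
      have : -(F x) * Real.exp (-(B x)) + Φ x * (Real.exp (-(B x)) * g x)
          = Real.exp (-(B x)) * (g x * (Φ x - φ x)) := by
        simp only [hF_def]; ring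
      rw [this]
      exact mul_nonneg h3.le (mul_nonneg h2 (sub_nonneg.2 h1))
  intro x hx
  have hb : b ∈ Icc a b := Set.right_mem_Icc.2 hab
  have hle := hmono hx hb hx.2
  have hhb : h b = 0 := by
    simp only [hh_def, hΦ_def, intervalIntegral.integral_same, zero_mul]
  rw [hhb] at hle
  have this2 : Φ x * Real.exp (-(B x)) ≤ 0 := hle
  have h3 : (0:ℝ) < Real.exp (-(B x)) := Real.exp_pos _
  have hΦx : Φ x ≤ 0 := by nlinarith [this2, h3]
  exact le_trans (key x hx) hΦx

/-- Continuity from the FTC representation. -/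
lemma lac_continuousOn {f f' : ℝ → ℝ} {ρmax : ℝ}
    (h : LocAbsolutelyContinuousOnIoc f f' ρmax) {a : ℝ} (ha : a ∈ Set.Ioc (0:ℝ) ρmax) :
    ContinuousOn f (Set.Icc a ρmax) := by
  have hint : IntegrableOn f' (Set.uIcc a ρmax) volume := by
    rw [Set.uIcc_of_le ha.2]; exact h.1 a ha
  have hcont : ContinuousOn (fun x => f a + ∫ t in a..x, f' t) (Set.Icc a ρmax) := by
    have := intervalIntegral.continuousOn_primitive_interval (μ := volume) hint
    rw [Set.uIcc_of_le ha.2] at this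
    exact continuousOn_const.add this
  exact hcont.congr fun x hx => h.2 a ha x ⟨ha.1.trans_le hx.1, hx.2⟩

/-- **Limit point case at `0`.**  Under hypotheses (H), if `v` solves
`v' = −c·l·v` a.e. with `c ≥ C` and `v(ρ̂) > 0`, then `v(ρ) ≥ (v(ρ̂)/l(ρ̂))·l(ρ)`
on `(0, ρ̂]`, and consequently `v` is not square-integrable near `0`. -/
theorem limit_point_solution_lower_bound
    (ρmax C : ℝ) (hρ : 0 < ρmax) (hC : 0 < C)
    (l l' : ℝ → ℝ)
    (hpos : ∀ ρ ∈ Set.Ioc (0:ℝ) ρmax, 0 < l ρ)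
    (hacl : LocAbsolutelyContinuousOnIoc l l' ρmax)
    (hbound : ∀ᵐ ρ ∂(volume.restrict (Set.Ioc (0:ℝ) ρmax)), |l' ρ| ≤ C * (l ρ) ^ 2)
    (hlim : Tendsto l (nhdsWithin 0 (Set.Ioi 0)) atTop)
    (c : ℝ) (hc : C ≤ c)
    (v v' : ℝ → ℝ)
    (hacv : LocAbsolutelyContinuousOnIoc v v' ρmax)
    (hv' : ∀ᵐ ρ ∂(volume.restrict (Set.Ioc (0:ℝ) ρmax)), v' ρ = -c * l ρ * v ρ)
    (hvpos : 0 < v ρmax) :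
    (∀ ρ ∈ Set.Ioc (0:ℝ) ρmax, v ρmax / l ρmax * l ρ ≤ v ρ) ∧
    ¬ IntegrableOn (fun t => (v t) ^ 2) (Set.Ioc (0:ℝ) ρmax) volume := by
  have hρm : ρmax ∈ Set.Ioc (0:ℝ) ρmax := ⟨hρ, le_rfl⟩
  have hlmax : 0 < l ρmax := hpos ρmax hρm
  have hc0 : 0 < c := hC.trans_le hc
  set K : ℝ := v ρmax / l ρmax with hK_def
  have hK : 0 < K := div_pos hvpos hlmax
  have hKl : K * l ρmax = v ρmax := div_mul_cancel₀ _ hlmax.ne'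
  have intl' : ∀ x ∈ Set.Ioc (0:ℝ) ρmax, IntervalIntegrable l' volume x ρmax := by
    intro x hx
    have := hacl.1 x hx
    rw [← Set.uIcc_of_le hx.2] at this
    exact this.intervalIntegrable
  have intv' : ∀ x ∈ Set.Ioc (0:ℝ) ρmax, IntervalIntegrable v' volume x ρmax := by
    intro x hx
    have := hacv.1 x hx
    rw [← Set.uIcc_of_le hx.2] at this
    exact this.intervalIntegrable
  -- Part 1 : v ρ ≥ K * l ρ
  have part1 : ∀ ρ ∈ Set.Ioc (0:ℝ) ρmax, K * l ρ - v ρ ≤ 0 := by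
    intro ρ hρ'
    have hsubI : Set.Icc ρ ρmax ⊆ Set.Ioc (0:ℝ) ρmax := fun t ht => ⟨hρ'.1.trans_le ht.1, ht.2⟩
    have contl := lac_continuousOn hacl hρ'
    have contv := lac_continuousOn hacv hρ'
    refine gronwall_zero ρ ρmax hρ'.2 (fun t => K * l t - v t) (fun t => c * l t)
      ((continuousOn_const.mul contl).sub contv) (continuousOn_const.mul contl)
      (fun x hx => mul_nonneg hc0.le (hpos x (hsubI hx)).le) ?_ ρ (Set.left_mem_Icc.2 hρ'.2)
    intro x hxI
    have hxIoc := hsubI hxI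
    have e1 := hacl.2 x hxIoc ρmax hρm
    have e2 := hacv.2 x hxIoc ρmax hρm
    have il' : IntervalIntegrable l' volume x ρmax := intl' x hxIoc
    have iv' : IntervalIntegrable v' volume x ρmax := intv' x hxIoc
    have eψ : K * l x - v x = ∫ t in x..ρmax, (v' t - K * l' t) := by
      rw [intervalIntegral.integral_sub iv' (il'.const_mul K),
        intervalIntegral.integral_const_mul]
      have f1 : (∫ t in x..ρmax, l' t) = l ρmax - l x := by linarith [e1]
      have f2 : (∫ t in x..ρmax, v' t) = v ρmax - v x := by linarith [e2]
      rw [f1, f2]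
      linear_combination hKl
    show K * l x - v x ≤ ∫ t in x..ρmax, c * l t * (K * l t - v t)
    rw [eψ]
    have hrhs : IntervalIntegrable (fun t => c * l t * (K * l t - v t)) volume x ρmax := by
      apply ContinuousOn.intervalIntegrable
      apply ((continuousOn_const.mul contl).mul ((continuousOn_const.mul contl).sub contv)).mono
      rw [Set.uIcc_of_le hxI.2]
      exact Set.Icc_subset_Icc hxI.1 le_rfl
    apply intervalIntegral.integral_mono_ae_restrict hxI.2 (iv'.sub (il'.const_mul K)) hrhs
    have hsub2 : Set.Icc x ρmax ⊆ Set.Ioc (0:ℝ) ρmax := fun t ht =>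
      ⟨(hρ'.1.trans_le hxI.1).trans_le ht.1, ht.2⟩
    have hb' := ae_restrict_of_ae_restrict_of_subset hsub2 hbound
    have hv'' := ae_restrict_of_ae_restrict_of_subset hsub2 hv'
    filter_upwards [hb', hv'', ae_restrict_mem measurableSet_Icc] with t htb htv htm
    have hlt : 0 < l t := hpos t (hsub2 htm)
    have h1 : -(C * l t ^ 2) ≤ l' t := (abs_le.mp htb).1
    rw [htv]
    have h2 : K * (-(l' t)) ≤ K * (C * l t ^ 2) := by
      apply mul_le_mul_of_nonneg_left _ hK.le
      linarith
    have h3 : 0 ≤ K * ((c - C) * l t ^ 2) :=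
      mul_nonneg hK.le (mul_nonneg (by linarith) (sq_nonneg _))
    nlinarith [h2, h3]
  -- Part 2 : l ρ₀ ≥ 1/(C ρ₀)
  have lbound : ∀ ρ₀ ∈ Set.Ioc (0:ℝ) ρmax, 1 ≤ C * l ρ₀ * ρ₀ := by
    intro ρ₀ hρ₀
    by_contra hcon
    push_neg at hcon
    set L : ℝ := l ρ₀ with hL_def
    have hL0 : 0 < L := hpos ρ₀ hρ₀
    have h10 : 0 < 1 - C * L * ρ₀ := by nlinarith
    set d : ℝ → ℝ := fun t => 1 - C * L * (ρ₀ - t) with hd_def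
    have hdpos : ∀ t : ℝ, 0 ≤ t → 0 < d t := by
      intro t ht
      have : 0 < C * L := mul_pos hC hL0
      simp only [hd_def]
      nlinarith
    set y : ℝ → ℝ := fun t => L / d t with hy_def
    have hy' : ∀ t : ℝ, 0 ≤ t → HasDerivAt y (-(C * (y t) ^ 2)) t := by
      intro t ht
      have hdt : HasDerivAt d (C * L) t := by
        have := HasDerivAt.const_sub 1
          (HasDerivAt.const_mul (C * L) (HasDerivAt.const_sub ρ₀ (hasDerivAt_id t)))
        simpa [hd_def] using this
      have hdd := (hasDerivAt_const t L).div hdt (hdpos t ht).ne'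
      refine hdd.congr_deriv ?_
      simp only [hy_def]
      field_simp
      ring
    have hyρ₀ : y ρ₀ = L := by simp [hy_def, hd_def]
    have hycont : ∀ s : Set ℝ, s ⊆ Set.Ici (0:ℝ) → ContinuousOn y s := by
      intro s hs
      apply continuousOn_const.div
      · fun_prop
      · exact fun t ht => (hdpos t (hs ht)).ne'
    -- l ≤ y on (0, ρ₀]
    have hle : ∀ t ∈ Set.Ioc (0:ℝ) ρ₀, l t ≤ y t := by
      intro t ht
      have hsubI : Set.Icc t ρ₀ ⊆ Set.Ioc (0:ℝ) ρmax := fun s hs =>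
        ⟨ht.1.trans_le hs.1, hs.2.trans hρ₀.2⟩
      have htI : t ∈ Set.Ioc (0:ℝ) ρmax := ⟨ht.1, ht.2.trans hρ₀.2⟩
      have contl := (lac_continuousOn hacl htI).mono (Set.Icc_subset_Icc le_rfl hρ₀.2)
      have conty := hycont (Set.Icc t ρ₀) (fun s hs => ht.1.le.trans hs.1)
      have hkey : ∀ x ∈ Set.Icc t ρ₀, l x - y x ≤
          ∫ s in x..ρ₀, (C * (l s + y s)) * (l s - y s) := by
        intro x hxI
        have hxIoc := hsubI hxI
        have e1 := hacl.2 x hxIoc ρ₀ ⟨hρ₀.1, hρ₀.2⟩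
        have il' : IntervalIntegrable l' volume x ρ₀ :=
          (intl' x hxIoc).mono_set (by
            rw [Set.uIcc_of_le hxI.2, Set.uIcc_of_le hxIoc.2]
            exact Set.Icc_subset_Icc le_rfl hρ₀.2)
        have hy'int : IntervalIntegrable (fun s => -(C * (y s) ^ 2)) volume x ρ₀ := by
          apply ContinuousOn.intervalIntegrable
          have : ContinuousOn y (Set.uIcc x ρ₀) := by
            apply hycont
            rw [Set.uIcc_of_le hxI.2]
            intro s hs
            exact (ht.1.trans_le hxI.1).le.trans hs.1
          fun_prop
        have e2 : ∫ s in x..ρ₀, -(C * (y s) ^ 2) = y ρ₀ - y x := by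
          apply intervalIntegral.integral_eq_sub_of_hasDerivAt _ hy'int
          intro s hs
          rw [Set.uIcc_of_le hxI.2] at hs
          exact hy' s ((ht.1.trans_le hxI.1).le.trans hs.1)
        have eψ : l x - y x = ∫ s in x..ρ₀, (-(C * (y s) ^ 2) - l' s) := by
          rw [intervalIntegral.integral_sub hy'int il']
          have f1 : (∫ s in x..ρ₀, l' s) = l ρ₀ - l x := by linarith [e1]
          rw [f1, e2, hyρ₀]
          ring
        rw [eψ]
        have hrhs : IntervalIntegrable (fun s => C * (l s + y s) * (l s - y s)) volume x ρ₀ := by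
          apply ContinuousOn.intervalIntegrable
          apply ContinuousOn.mono (s := Set.Icc t ρ₀)
          · exact (continuousOn_const.mul (contl.add conty)).mul (contl.sub conty)
          · rw [Set.uIcc_of_le hxI.2]
            exact Set.Icc_subset_Icc hxI.1 le_rfl
        apply intervalIntegral.integral_mono_ae_restrict hxI.2 (hy'int.sub il') hrhs
        have hsub2 : Set.Icc x ρ₀ ⊆ Set.Ioc (0:ℝ) ρmax := fun s hs =>
          ⟨(ht.1.trans_le hxI.1).trans_le hs.1, hs.2.trans hρ₀.2⟩
        have hb' := ae_restrict_of_ae_restrict_of_subset hsub2 hbound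
        filter_upwards [hb', ae_restrict_mem measurableSet_Icc] with s hsb hsm
        have h1 : -(C * l s ^ 2) ≤ l' s := (abs_le.mp hsb).1
        nlinarith [h1]
      have := gronwall_zero t ρ₀ ht.2 (fun s => l s - y s) (fun s => C * (l s + y s))
        (contl.sub conty) (continuousOn_const.mul (contl.add conty))
        (fun s hs => by
          have hls : 0 < l s := hpos s (hsubI hs)
          have hys : 0 < y s := div_pos hL0 (hdpos s (ht.1.le.trans hs.1))
          positivity)
        hkey t (Set.left_mem_Icc.2 ht.2)
      have h0 : l t - y t ≤ 0 := this
      linarith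
    -- l is bounded on (0, ρ₀], contradicting hlim
    set M : ℝ := L / (1 - C * L * ρ₀) with hM_def
    have hbd : ∀ t ∈ Set.Ioc (0:ℝ) ρ₀, l t ≤ M := by
      intro t ht
      refine (hle t ht).trans ?_
      have hdt : 0 < d t := hdpos t ht.1.le
      rw [hy_def, hM_def, div_le_div_iff₀ hdt h10]
      have : 0 < C * L := mul_pos hC hL0
      simp only [hd_def]
      nlinarith [mul_pos (mul_pos this hL0) ht.1]
    have hev : ∀ᶠ x in nhdsWithin 0 (Set.Ioi 0), M < l x :=
      hlim.eventually (eventually_gt_atTop M)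
    have hmem : Set.Ioc (0:ℝ) ρ₀ ∈ nhdsWithin 0 (Set.Ioi (0:ℝ)) :=
      Ioc_mem_nhdsGT_of_mem ⟨le_rfl, hρ₀.1⟩
    obtain ⟨x, hx1, hx2⟩ := (hev.and (eventually_of_mem hmem fun x hx => hx)).exists
    exact absurd (hbd x hx2) (not_le.2 hx1)
  -- Assemble the two conclusions
  constructor
  · intro ρ hρ'
    have := part1 ρ hρ'
    rw [hK_def] at this
    linarith
  · intro hI
    -- v t ≥ K / (C * t), so v t ^ 2 ≥ (K/(C t))^2 which is not integrable
    have hIoo : IntegrableOn (fun t => (C / K) ^ 2 * (v t) ^ 2) (Set.Ioo (0:ℝ) ρmax) volume :=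
      ((hI.mono_set Set.Ioo_subset_Ioc_self).const_mul _)
    have h2 : IntegrableOn (fun x : ℝ => (x⁻¹) ^ 2) (Set.Ioo (0:ℝ) ρmax) volume := by
      apply hIoo.mono' ((measurable_inv.pow_const 2).aestronglyMeasurable)
      filter_upwards [ae_restrict_mem measurableSet_Ioo] with t htm
      have ht0 : 0 < t := htm.1
      have htI : t ∈ Set.Ioc (0:ℝ) ρmax := ⟨htm.1, htm.2.le⟩
      have hlt : 0 < l t := hpos t htI
      have hvt : K * l t ≤ v t := by linarith [part1 t htI]
      have hlb : 1 ≤ C * l t * t := lbound t htI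
      have hlt2 : 1 / (C * t) ≤ l t := by
        rw [div_le_iff₀ (mul_pos hC ht0)]
        nlinarith
      have hvt2 : K / (C * t) ≤ v t := by
        have : K * (1 / (C * t)) ≤ K * l t := mul_le_mul_of_nonneg_left hlt2 hK.le
        rw [mul_one_div] at this
        linarith
      have hpos2 : 0 < K / (C * t) := div_pos hK (mul_pos hC ht0)
      have hsq : (K / (C * t)) ^ 2 ≤ (v t) ^ 2 := pow_le_pow_left₀ hpos2.le hvt2 2
      rw [Real.norm_eq_abs, abs_of_nonneg (by positivity)]
      have hid : (t⁻¹) ^ 2 = (C / K) ^ 2 * (K / (C * t)) ^ 2 := by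
        field_simp
      rw [hid]
      exact mul_le_mul_of_nonneg_left hsq (by positivity)
    have h3 : IntegrableOn (fun x : ℝ => x ^ (-2 : ℝ)) (Set.Ioo (0:ℝ) ρmax) volume := by
      apply h2.congr_fun _ measurableSet_Ioo
      intro x hx
      show x⁻¹ ^ 2 = x ^ (-2 : ℝ)
      have h4 : ((-2:ℝ)) = ((-2:ℤ):ℝ) := by norm_num
      rw [h4, Real.rpow_intCast, zpow_neg, ← inv_zpow, pow_two, zpow_two]
    have := (integrableOn_Ioo_rpow_iff hρ).1 h3
    norm_num at this
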